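/- Let m and h be integers with 2 ≤ h ≤ m, and let A be a finite subset of an additive abelian group G with |A| = m such that the restricted h-fold sumset satisfies |h^∧A| = C(m, h). Let a ∈ A and B = A \ {a}. Then the restricted (h−1)-fold sumset of B satisfies |(h−1)^∧B| = C(m−1, h−1). -/
import Mathlib


open Finset Pointwise

/-- The `h`-fold sumset `hA`: the set of all sums of `h` elements of `A`
(repetitions allowed). -/
def foldSumset {G : Type*} [AddCommMonoid G] [DecidableEq G] : ℕ → Finset G → Finset G
  | 0, _ => {0}
  | n + 1, A => A + foldSumset n A

/-- The restricted `h`-fold sumset `h^∧A`: the set of all sums of `h` pairwise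
distinct elements of `A`, i.e. sums `∑ x ∈ S, x` over `S ⊆ A` with `|S| = h`. -/
def restrictedSumset {G : Type*} [AddCommMonoid G] [DecidableEq G] (h : ℕ) (A : Finset G) :
    Finset G :=
  (A.powersetCard h).image fun S => S.sum id

/-- The restricted `[0,h]`-fold sumset `[0,h]^∧A = ⋃_{s=0}^{h} s^∧A`. -/
def restrictedIntervalSumset {G : Type*} [AddCommMonoid G] [DecidableEq G] (h : ℕ)
    (A : Finset G) : Finset G :=
  (Finset.range (h + 1)).biUnion fun s => restrictedSumset s A

theorem restricted_sumset_erase_card {G : Type*} [AddCommGroup G] [DecidableEq G]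
    (m h : ℕ) (hh : 2 ≤ h) (hhm : h ≤ m) (A : Finset G) (hA : A.card = m)
    (hmax : (restrictedSumset h A).card = Nat.choose m h) (a : G) (ha : a ∈ A) :
    (restrictedSumset (h - 1) (A.erase a)).card = Nat.choose (m - 1) (h - 1) := by
  have hm1 : 1 ≤ h := le_trans (by norm_num) hh
  have hinj : Set.InjOn (fun S : Finset G => S.sum id) (A.powersetCard h) := by
    rw [← Finset.card_image_iff]
    have : (A.powersetCard h).card = Nat.choose m h := by
      rw [Finset.card_powersetCard, hA]
    rw [this]; exact hmax
  have hinj' : Set.InjOn (fun S : Finset G => S.sum id) ((A.erase a).powersetCard (h - 1)) := by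
    intro S hS T hT hsum
    rw [Finset.mem_coe, Finset.mem_powersetCard] at hS hT
    have haS : a ∉ S := fun hx => (Finset.mem_erase.mp (hS.1 hx)).1 rfl
    have haT : a ∉ T := fun hx => (Finset.mem_erase.mp (hT.1 hx)).1 rfl
    have h1 : insert a S ∈ A.powersetCard h := by
      rw [Finset.mem_powersetCard]
      constructor
      · exact Finset.insert_subset ha (hS.1.trans (Finset.erase_subset _ _))
      · rw [Finset.card_insert_of_notMem haS, hS.2, Nat.sub_add_cancel hm1]
    have h2 : insert a T ∈ A.powersetCard h := by
      rw [Finset.mem_powersetCard]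
      constructor
      · exact Finset.insert_subset ha (hT.1.trans (Finset.erase_subset _ _))
      · rw [Finset.card_insert_of_notMem haT, hT.2, Nat.sub_add_cancel hm1]
    have heq : insert a S = insert a T := by
      apply hinj h1 h2
      simp only [Finset.sum_insert haS, Finset.sum_insert haT, id]
      simpa using hsum
    have := congrArg (fun s => Finset.erase s a) heq
    simpa [Finset.erase_insert haS, Finset.erase_insert haT] using this
  rw [restrictedSumset, Finset.card_image_of_injOn hinj', Finset.card_powersetCard,
    Finset.card_erase_of_mem ha, hA]
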